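/- Telescoping of the star contributions: let e^{iγ_1}, ..., e^{iγ_k}, and back to e^{iγ_{k+1}} = e^{iγ_1}, be unit vectors in cyclic order around a vertex v of an isoradial graph (γ_1 < γ_2 < ... < γ_k < γ_1 + 2π), so that neighbor u_j satisfies u_j - v = e^{iγ_j} + e^{iγ_{j+1}} and θ_j = (γ_{j+1} - γ_j)/2 ∈ (0, π/2). Then ∑_{j=1}^k tan(θ_j)(u_j - v) = 0. -/
import Mathlib


open Finset

lemma star_key (a b : ℝ) (h : Real.cos ((b - a) / 2) ≠ 0) :
    (Real.tan ((b - a) / 2) : ℂ) *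
      (Complex.exp (Complex.I * a) + Complex.exp (Complex.I * b)) =
    -Complex.I * (Complex.exp (Complex.I * b) - Complex.exp (Complex.I * a)) := by
  have hb : (b : ℂ) = a + 2 * ((b - a) / 2 : ℝ) := by push_cast; ring
  set θ : ℝ := (b - a) / 2 with hθ
  have hc' : Complex.cos θ ≠ 0 := by
    rw [← Complex.ofReal_cos]; exact_mod_cast h
  rw [Real.tan_eq_sin_div_cos]
  push_cast
  rw [div_mul_eq_mul_div, div_eq_iff hc', Complex.sin, Complex.cos, hb]
  rw [show Complex.I * ((a : ℂ) + 2 * θ) = Complex.I * a + ((θ : ℂ) * Complex.I + θ * Complex.I) by ring,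
    Complex.exp_add, Complex.exp_add,
    show -(θ : ℂ) * Complex.I = -((θ : ℂ) * Complex.I) by ring, Complex.exp_neg]
  field_simp [Complex.exp_ne_zero]
  ring

/-- Telescoping of the star contributions around a vertex of an isoradial graph: if
`e^{iγ_0}, …, e^{iγ_{k-1}}` are the rhombus side directions around a vertex `v`, in strictly
increasing cyclic order with `γ_k = γ_0 + 2π` and gaps `γ_{j+1} - γ_j < π`, and the
neighbors are `u_j = v + e^{iγ_j} + e^{iγ_{j+1}}` with half-angles `θ_j = (γ_{j+1}-γ_j)/2`,
then `∑_j tan(θ_j)·(u_j - v) = 0`: `v` is the conductance-weighted barycenter of its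
neighbors. -/
theorem star_telescoping (k : ℕ) (hk : 0 < k) (γ : ℕ → ℝ) (v : ℂ) (u : ℕ → ℂ)
    (hmono : ∀ j < k, γ j < γ (j + 1))
    (hgap : ∀ j < k, γ (j + 1) - γ j < Real.pi)
    (hper : γ k = γ 0 + 2 * Real.pi)
    (hu : ∀ j < k, u j = v + Complex.exp (Complex.I * γ j) +
      Complex.exp (Complex.I * γ (j + 1))) :
    ∑ j ∈ Finset.range k, (Real.tan ((γ (j + 1) - γ j) / 2) : ℂ) * (u j - v) = 0 := by
  have hterm : ∀ j ∈ Finset.range k,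
      (Real.tan ((γ (j + 1) - γ j) / 2) : ℂ) * (u j - v) =
      -Complex.I * (Complex.exp (Complex.I * γ (j + 1)) - Complex.exp (Complex.I * γ j)) := by
    intro j hj
    rw [Finset.mem_range] at hj
    have hcos : Real.cos ((γ (j + 1) - γ j) / 2) ≠ 0 := by
      have h1 : 0 < (γ (j + 1) - γ j) / 2 := by linarith [hmono j hj]
      have h2 : (γ (j + 1) - γ j) / 2 < Real.pi / 2 := by linarith [hgap j hj]
      exact ne_of_gt (Real.cos_pos_of_mem_Ioo ⟨by linarith [Real.pi_pos], h2⟩)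
    rw [hu j hj, show v + Complex.exp (Complex.I * γ j) + Complex.exp (Complex.I * γ (j + 1)) - v
        = Complex.exp (Complex.I * γ j) + Complex.exp (Complex.I * γ (j + 1)) by ring]
    exact star_key _ _ hcos
  rw [Finset.sum_congr rfl hterm, ← Finset.mul_sum, Finset.sum_range_sub
    (fun j => Complex.exp (Complex.I * γ j)), hper]
  push_cast
  rw [mul_add, Complex.exp_add, show Complex.I * (2 * Real.pi) = 2 * Real.pi * Complex.I by ring,
    Complex.exp_two_pi_mul_I, mul_one, sub_self, mul_zero]
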